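/- For a positive integer a, every solution (x,y) ∈ ℕ² of ax + y ≡ 0 (mod 2a+1) can be written uniquely as λ₁(2a+1,0) + λ₂(0,2a+1) + m(1,a+1) + n(2,1) with λ₁, λ₂ ∈ ℕ and (m,n) ∈ {0}×{0,…,a} ∪ {1}×{0,…,a−1}. -/
import Mathlib


/-- For a positive integer `a`, every solution `(x,y) ∈ ℕ²` of
`ax + y ≡ 0 (mod 2a+1)` can be written uniquely as
`λ₁(2a+1,0) + λ₂(0,2a+1) + m(1,a+1) + n(2,1)` with `λ₁, λ₂ ∈ ℕ` and
`(m,n) ∈ {0}×{0,…,a} ∪ {1}×{0,…,a−1}`. -/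
theorem stmt_13 (a : ℕ) (ha : 0 < a)
    (M : Set (ℕ × ℕ)) (hM : M = {p | (2 * a + 1) ∣ a * p.1 + p.2})
    (x : ℕ × ℕ) (hx : x ∈ M) :
    ∃! p : ℕ × ℕ × ℕ × ℕ,
      ((p.2.2.1 = 0 ∧ p.2.2.2 ≤ a) ∨ (p.2.2.1 = 1 ∧ p.2.2.2 ≤ a - 1)) ∧
      x = p.1 • ((2 * a + 1, 0) : ℕ × ℕ) + p.2.1 • ((0, 2 * a + 1) : ℕ × ℕ)
            + p.2.2.1 • ((1, a + 1) : ℕ × ℕ) + p.2.2.2 • ((2, 1) : ℕ × ℕ) := by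
  subst hM
  obtain ⟨X, Y⟩ := x
  simp only [Set.mem_setOf_eq] at hx
  set N := 2 * a + 1 with hN
  have hNpos : 0 < N := by omega
  set r := X % N with hr
  have hrlt : r < N := Nat.mod_lt _ hNpos
  set m := r % 2 with hm
  set n := r / 2 with hn
  have hmn : m + 2 * n = r := by omega
  have hm1 : m ≤ 1 := by omega
  set c := m * (a + 1) + n with hc
  have hcN : a * r + c = (m + n) * N := by rw [← hmn, hc, hN]; ring
  have hclt : c < N := by
    have hm01 : m = 0 ∨ m = 1 := by omega
    rcases hm01 with h | h <;> rw [hc, h] <;> omega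
  -- Y % N = c
  have hXr : X ≡ r [MOD N] := by unfold Nat.ModEq; rw [Nat.mod_eq_of_lt hrlt]
  have h0 : a * X + Y ≡ a * r + Y [MOD N] := (hXr.mul_left a).add_right Y
  have h1 : a * r + Y ≡ 0 [MOD N] := h0.symm.trans ((Nat.modEq_zero_iff_dvd).2 hx)
  have h2 : a * r + c ≡ 0 [MOD N] := (Nat.modEq_zero_iff_dvd).2 ⟨m + n, by rw [hcN]; ring⟩
  have hYc : Y ≡ c [MOD N] := Nat.ModEq.add_left_cancel' (a * r) (h1.trans h2.symm)
  have hYmod : Y % N = c := by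
    have := hYc; unfold Nat.ModEq at this; rw [Nat.mod_eq_of_lt hclt] at this; exact this
  obtain ⟨l1, hl1⟩ : ∃ l, X = l * N + r := ⟨X / N, by rw [hr]; exact (Nat.div_add_mod' X N).symm⟩
  obtain ⟨l2, hl2⟩ : ∃ l, Y = l * N + c := ⟨Y / N, by rw [← hYmod]; exact (Nat.div_add_mod' Y N).symm⟩
  refine ⟨⟨l1, l2, m, n⟩, ⟨?_, ?_⟩, ?_⟩
  · dsimp only
    have hm01 : m = 0 ∨ m = 1 := by omega
    rcases hm01 with h | h
    · exact Or.inl ⟨h, by omega⟩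
    · refine Or.inr ⟨h, ?_⟩
      have : r ≤ 2 * a := by omega
      omega
  · simp only [Prod.ext_iff]
    constructor
    · simp only [Prod.fst_add, Prod.smul_mk, smul_eq_mul, Prod.snd_add]
      rw [hl1, ← hmn]; ring
    · simp only [Prod.fst_add, Prod.smul_mk, smul_eq_mul, Prod.snd_add]
      rw [hl2, hc]; ring
  · rintro ⟨p1, p2, pm, pn⟩ ⟨hcon, heq⟩
    simp only [Prod.ext_iff, Prod.fst_add, Prod.smul_mk, smul_eq_mul, Prod.snd_add] at heq
    dsimp only at hcon heq ⊢
    obtain ⟨hXeq, hYeq⟩ := heq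
    -- pm + 2pn ≤ 2a
    have hple : pm + 2 * pn ≤ 2 * a := by rcases hcon with ⟨h, h'⟩ | ⟨h, h'⟩ <;> omega
    have hXeq' : X = (pm + pn * 2) + p1 * N := by rw [hXeq, hN]; ring
    have hrp : r = pm + pn * 2 := by
      rw [hr, hXeq', Nat.add_mul_mod_self_right]
      exact Nat.mod_eq_of_lt (by omega)
    have hpmle : pm ≤ 1 := by rcases hcon with ⟨h, _⟩ | ⟨h, _⟩ <;> omega
    have hpm : pm = m ∧ pn = n := by omega
    obtain ⟨hpm1, hpn1⟩ := hpm
    subst hpm1; subst hpn1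
    have hp1 : p1 = l1 := by
      have : p1 * N = l1 * N := by omega
      exact Nat.eq_of_mul_eq_mul_right hNpos this
    have hYeq' : Y = p2 * N + c := by rw [hYeq, hc, hN]; ring
    have hp2 : p2 = l2 := by
      have : p2 * N = l2 * N := by omega
      exact Nat.eq_of_mul_eq_mul_right hNpos this
    simp [hp1, hp2]
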